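/- In the six-symbol bosonic Weyl system realizing the fields β(z), β*(z), ε_1(z), ε_1*(z), ε_2(z), ε_2*(z), with x_0⁺(m) := ½(:β*e*:)(m) and x_1⁺(m) := √−1·(:ef*:)(m), the quadratic Serre relation holds in mode form: for all k_1, k_2, l ∈ ℤ, [x_0⁺(k_1), [x_0⁺(k_2), x_1⁺(l)]] = 0, where [A,B] = AB − BA. (This is the coefficientwise form of the relation [x_0^+(z_1), [x_0^+(z_2), x_1^+(w)]] = 0 verified in the proof of Theorem 3.5.) -/

import Mathlib

noncomputable section

/-- A *bosonic Weyl system* over a set `S` of symbols with pairing `pair : S → S → ℂ`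
on a complex vector space `W`: a family of operators `op u k` (`u ∈ S`, `k ∈ ℤ`)
such that `[op u k, op v l] = ⟨u,v⟩ δ_{k+l,0} id`. -/
def IsBosonicWeylSystem {S W : Type*} [AddCommGroup W] [Module ℂ W]
    (pair : S → S → ℂ) (op : S → ℤ → Module.End ℂ W) : Prop :=
  ∀ u v : S, ∀ k l : ℤ,
    op u k * op v l - op v l * op u k =
      if k + l = 0 then pair u v • (1 : Module.End ℂ W) else 0

/-- A family of operators is *locally annihilating* if for every vector `w` and
every symbol `u`, `op u k w = 0` for all sufficiently large `k`. -/
def LocallyAnnihilating {S W : Type*} [AddCommGroup W] [Module ℂ W]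
    (op : S → ℤ → Module.End ℂ W) : Prop :=
  ∀ (w : W) (u : S), ∃ K : ℤ, ∀ k : ℤ, K ≤ k → op u k w = 0

/-- The normally ordered quadratic mode
`(:uv:)(m) = Σ_{j<0} u(j)v(m-j) + Σ_{j≥0} v(m-j)u(j)` applied to a vector `w`;
on a locally annihilating system all but finitely many summands vanish, so the
`finsum` computes the intended (finite) sum. -/
def noMode {S W : Type*} [AddCommGroup W] [Module ℂ W]
    (op : S → ℤ → Module.End ℂ W) (u v : S) (m : ℤ) (w : W) : W :=
  ∑ᶠ j : ℤ, if j < 0 then op u j (op v (m - j) w) else op v (m - j) (op u j w)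

end

/-- The six symbols `β, β*, ε₁, ε₁*, ε₂, ε₂*`: the symbol `(i, false)` is the plain
symbol (`0 = β`, `1 = ε₁ = e`, `2 = ε₂ = f`) and `(i, true)` the starred one. -/
abbrev WSym6 : Type := Fin 3 × Bool

/-- The Gram values `g(β,β) = g(β,e) = g(e,β) = g(e,e) = g(f,f) = 1`, `g(β,f) = g(e,f) = 0`. -/
noncomputable def gram6 : Fin 3 → Fin 3 → ℂ := !![1, 1, 0; 1, 1, 0; 0, 0, 1]

/-- The pairing `⟨u, v*⟩ = -g(u,v)`, `⟨u*, v⟩ = g(u,v)`, `⟨u,v⟩ = ⟨u*,v*⟩ = 0`. -/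
noncomputable def pair6 : WSym6 → WSym6 → ℂ
  | (i, false), (j, true) => -gram6 i j
  | (i, true), (j, false) => gram6 i j
  | _, _ => 0

section
variable {W : Type*} [AddCommGroup W] [Module ℂ W] (op : WSym6 → ℤ → Module.End ℂ W)

/-- `x₀⁺(m) = ½ (:β*e*:)(m)` (applied to a vector). -/
noncomputable def xZeroPlus (m : ℤ) (w : W) : W :=
  (1 / 2 : ℂ) • noMode op (0, true) (1, true) m w

/-- `x₀⁻(m) = ½ (:βe:)(m)` (applied to a vector). -/
noncomputable def xZeroMinus (m : ℤ) (w : W) : W :=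
  (1 / 2 : ℂ) • noMode op (0, false) (1, false) m w

/-- `x₁⁺(m) = √-1 (:ef*:)(m)` (applied to a vector). -/
noncomputable def xOnePlus (m : ℤ) (w : W) : W :=
  Complex.I • noMode op (1, false) (2, true) m w

/-- `α₀(m) = -½[(:ee*:)(m) + (:eβ*:)(m) + (:βe*:)(m) + (:ββ*:)(m)]` (applied to a vector). -/
noncomputable def alZero (m : ℤ) (w : W) : W :=
  (-(1 / 2) : ℂ) • (noMode op (1, false) (1, true) m w + noMode op (1, false) (0, true) m w +
    noMode op (0, false) (1, true) m w + noMode op (0, false) (0, true) m w)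

end

/-- The commutator `[A, B] = AB - BA` of two (pointwise-defined) operators. -/
def brkt {W : Type*} [AddCommGroup W] (A B : W → W) : W → W := fun w => A (B w) - B (A w)

section Aux
variable {S : Type*} {W : Type*} [AddCommGroup W] [Module ℂ W]
variable {pair : S → S → ℂ} {op : S → ℤ → Module.End ℂ W}

lemma op_brkt (hW : IsBosonicWeylSystem pair op) (u v : S) (k l : ℤ) (w : W) :
    op u k (op v l w) = op v l (op u k w) + (if k + l = 0 then pair u v • w else 0) := by
  have h := congrArg (fun T : Module.End ℂ W => T w) (hW u v k l)
  simp only [LinearMap.sub_apply, Module.End.mul_apply] at h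
  by_cases hkl : k + l = 0
  · rw [if_pos hkl]
    simp only [hkl, if_true, LinearMap.smul_apply, Module.End.one_apply] at h
    rw [← h]; abel
  · rw [if_neg hkl]
    simp only [hkl, if_false, LinearMap.zero_apply] at h
    rw [add_zero, ← sub_eq_zero, h]

lemma op_comm (hW : IsBosonicWeylSystem pair op) {u v : S} (huv : pair u v = 0)
    (k l : ℤ) (w : W) : op u k (op v l w) = op v l (op u k w) := by
  rw [op_brkt hW u v k l w, huv]
  simp

lemma fin_supp (hW : IsBosonicWeylSystem pair op) (hA : LocallyAnnihilating op)
    {u v : S} (huv : pair u v = 0) (c d : ℤ) (w : W) :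
    (Function.support fun j : ℤ => op u (c + j) (op v (d - j) w)).Finite := by
  obtain ⟨K, hK⟩ := hA w u
  obtain ⟨K', hK'⟩ := hA w v
  apply Set.Finite.subset (Set.finite_Icc (d - K' + 1) (K - c))
  intro j hj
  simp only [Function.mem_support, ne_eq] at hj
  rw [Set.mem_Icc]
  constructor
  · by_contra h
    push_neg at h
    exact hj (by rw [hK' (d - j) (by omega), map_zero])
  · by_contra h
    push_neg at h
    exact hj (by rw [op_comm hW huv, hK (c + j) (by omega), map_zero])

lemma noMode_eq (hW : IsBosonicWeylSystem pair op) {u v : S} (huv : pair u v = 0)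
    (m : ℤ) (w : W) : noMode op u v m w = ∑ᶠ j : ℤ, op u j (op v (m - j) w) := by
  unfold noMode
  apply finsum_congr
  intro j
  split_ifs with h
  · rfl
  · exact (op_comm hW huv j (m - j) w).symm

lemma supp0 (hW : IsBosonicWeylSystem pair op) (hA : LocallyAnnihilating op)
    {u v : S} (huv : pair u v = 0) (m : ℤ) (w : W) :
    (Function.support fun j : ℤ => op u j (op v (m - j) w)).Finite := by
  have h := fin_supp hW hA huv 0 m w
  simpa using h

lemma noMode_smul (hW : IsBosonicWeylSystem pair op) (hA : LocallyAnnihilating op)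
    {u v : S} (huv : pair u v = 0) (m : ℤ) (c : ℂ) (w : W) :
    noMode op u v m (c • w) = c • noMode op u v m w := by
  rw [noMode_eq hW huv, noMode_eq hW huv]
  have h : ∀ j : ℤ, op u j (op v (m - j) (c • w)) = c • op u j (op v (m - j) w) := by
    intro j; rw [map_smul, map_smul]
  rw [finsum_congr h, ← smul_finsum' c (supp0 hW hA huv m w)]

lemma noMode_add (hW : IsBosonicWeylSystem pair op) (hA : LocallyAnnihilating op)
    {u v : S} (huv : pair u v = 0) (m : ℤ) (w w' : W) :
    noMode op u v m (w + w') = noMode op u v m w + noMode op u v m w' := by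
  rw [noMode_eq hW huv, noMode_eq hW huv, noMode_eq hW huv,
    ← finsum_add_distrib (supp0 hW hA huv m w) (supp0 hW hA huv m w')]
  apply finsum_congr
  intro j
  rw [map_add, map_add]

lemma lemmaM (hW : IsBosonicWeylSystem pair op) (hA : LocallyAnnihilating op)
    (u v s : S) {m : ℤ} (huv : pair u v = 0) (c : ℤ) (w : W) :
    noMode op u v m (op s c w) =
      op s c (noMode op u v m w) + pair v s • op u (m + c) w + pair u s • op v (m + c) w := by
  rw [noMode_eq hW huv, noMode_eq hW huv]
  have step : ∀ j : ℤ, op u j (op v (m - j) (op s c w)) =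
      op s c (op u j (op v (m - j) w)) +
        ((if j = m + c then pair v s • op u j w else 0) +
         (if j = -c then pair u s • op v (m - j) w else 0)) := by
    intro j
    rw [op_brkt hW v s (m - j) c w, map_add, op_brkt hW u s j c (op v (m - j) w)]
    by_cases e1 : m - j + c = 0 <;> by_cases e2 : j + c = 0
    · rw [if_pos e1, if_pos e2, map_smul, if_pos (show j = m + c by omega),
        if_pos (show j = -c by omega)]
      abel
    · rw [if_pos e1, if_neg e2, map_smul, if_pos (show j = m + c by omega),
        if_neg (show ¬ j = -c by omega)]
      abel
    · rw [if_neg e1, if_pos e2, map_zero, if_neg (show ¬ j = m + c by omega),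
        if_pos (show j = -c by omega)]
      abel
    · rw [if_neg e1, if_neg e2, map_zero, if_neg (show ¬ j = m + c by omega),
        if_neg (show ¬ j = -c by omega)]
      abel
  rw [finsum_congr step]
  have hfa : (Function.support fun j : ℤ => op s c (op u j (op v (m - j) (w : W)))).Finite := by
    apply Set.Finite.subset (supp0 hW hA huv m w)
    intro j hj
    rw [Function.mem_support] at hj ⊢
    intro h0
    exact hj (by rw [h0, map_zero])
  have hfb : (Function.support fun j : ℤ =>
      ((if j = m + c then pair v s • op u j w else 0) +
       (if j = -c then pair u s • op v (m - j) w else 0))).Finite := by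
    apply Set.Finite.subset ((Set.finite_singleton (m + c)).union (Set.finite_singleton (-c)))
    intro j hj
    rw [Function.mem_support] at hj
    by_contra h
    simp only [Set.mem_union, Set.mem_singleton_iff, not_or] at h
    rw [if_neg h.1, if_neg h.2, add_zero] at hj
    exact hj rfl
  have hfb1 : (Function.support fun j : ℤ =>
      (if j = m + c then pair v s • op u j w else 0)).Finite := by
    apply Set.Finite.subset (Set.finite_singleton (m + c))
    intro j hj
    rw [Function.mem_support] at hj
    by_contra h
    rw [Set.mem_singleton_iff] at h
    exact hj (if_neg h)
  have hfb2 : (Function.support fun j : ℤ =>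
      (if j = -c then pair u s • op v (m - j) w else 0)).Finite := by
    apply Set.Finite.subset (Set.finite_singleton (-c))
    intro j hj
    rw [Function.mem_support] at hj
    by_contra h
    rw [Set.mem_singleton_iff] at h
    exact hj (if_neg h)
  rw [finsum_add_distrib hfa hfb, finsum_add_distrib hfb1 hfb2]
  have k1 : (∑ᶠ j : ℤ, op s c (op u j (op v (m - j) w))) =
      op s c (∑ᶠ j : ℤ, op u j (op v (m - j) w)) := by
    exact ((op s c).toAddMonoidHom.map_finsum (supp0 hW hA huv m w)).symm
  have k2 : (∑ᶠ j : ℤ, if j = m + c then pair v s • op u j w else 0) =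
      pair v s • op u (m + c) w := by
    rw [finsum_eq_single _ (m + c) (fun x hx => if_neg hx), if_pos rfl]
  have k3 : (∑ᶠ j : ℤ, if j = -c then pair u s • op v (m - j) w else 0) =
      pair u s • op v (m + c) w := by
    rw [finsum_eq_single _ (-c) (fun x hx => if_neg hx), if_pos rfl, sub_neg_eq_add]
  rw [k1, k2, k3, add_assoc]

end Aux

lemma pair6_tt (i j : Fin 3) : pair6 (i, true) (j, true) = 0 := rfl

section Main
variable {W : Type*} [AddCommGroup W] [Module ℂ W]

lemma pair6_BE : pair6 ((0 : Fin 3), true) ((1 : Fin 3), true) = 0 := rfl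
lemma pair6_eF : pair6 ((1 : Fin 3), false) ((2 : Fin 3), true) = 0 := by
  show -gram6 1 2 = 0; norm_num [gram6]; rfl
lemma pair6_Ee : pair6 ((1 : Fin 3), true) ((1 : Fin 3), false) = 1 := by
  show gram6 1 1 = 1; norm_num [gram6]
lemma pair6_Be : pair6 ((0 : Fin 3), true) ((1 : Fin 3), false) = 1 := by
  show gram6 0 1 = 1; norm_num [gram6]

lemma Yformula (op : WSym6 → ℤ → Module.End ℂ W)
    (hW : IsBosonicWeylSystem pair6 op) (hA : LocallyAnnihilating op) (k l : ℤ) (v : W) :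
    brkt (xZeroPlus op k) (xOnePlus op l) v =
      (Complex.I * (1 / 2 : ℂ)) • ∑ᶠ j : ℤ,
        (op (0, true) (k + j) (op (2, true) (l - j) v) +
         op (1, true) (k + j) (op (2, true) (l - j) v)) := by
  show xZeroPlus op k (xOnePlus op l v) - xOnePlus op l (xZeroPlus op k v) = _
  unfold xZeroPlus xOnePlus
  rw [noMode_smul hW hA pair6_BE, noMode_smul hW hA pair6_eF, smul_smul, smul_smul,
    mul_comm (1 / 2 : ℂ) Complex.I, ← smul_sub]
  congr 1
  rw [noMode_eq hW pair6_eF l v, noMode_eq hW pair6_eF l (noMode op (0, true) (1, true) k v)]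
  have key1 : noMode op (0, true) (1, true) k
        (∑ᶠ j : ℤ, op (1, false) j (op (2, true) (l - j) v)) =
      ∑ᶠ j : ℤ, noMode op (0, true) (1, true) k (op (1, false) j (op (2, true) (l - j) v)) :=
    AddMonoidHom.map_finsum (AddMonoidHom.mk' (noMode op (0, true) (1, true) k)
      (noMode_add hW hA pair6_BE k)) (supp0 hW hA pair6_eF l v)
  rw [key1]
  have key2 : ∀ j : ℤ, noMode op (0, true) (1, true) k (op (1, false) j (op (2, true) (l - j) v)) =
      op (1, false) j (op (2, true) (l - j) (noMode op (0, true) (1, true) k v)) +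
        (op (0, true) (k + j) (op (2, true) (l - j) v) +
         op (1, true) (k + j) (op (2, true) (l - j) v)) := by
    intro j
    rw [lemmaM hW hA _ _ _ pair6_BE j (op (2, true) (l - j) v),
      lemmaM hW hA _ _ _ pair6_BE (l - j) v]
    simp only [pair6_Ee, pair6_Be, pair6_tt, one_smul, zero_smul, add_zero, map_add]
    abel
  rw [finsum_congr key2]
  have hb : (Function.support fun j : ℤ =>
      (op ((0 : Fin 3), true) (k + j) (op ((2 : Fin 3), true) (l - j) v) +
       op ((1 : Fin 3), true) (k + j) (op ((2 : Fin 3), true) (l - j) v))).Finite := by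
    apply Set.Finite.subset
      ((fin_supp hW hA (pair6_tt 0 2) k l v).union (fin_supp hW hA (pair6_tt 1 2) k l v))
    intro j hj
    rw [Function.mem_support] at hj
    by_contra h
    simp only [Set.mem_union, Function.mem_support, not_or, not_not] at h
    rw [h.1, h.2, add_zero] at hj
    exact hj rfl
  rw [finsum_add_distrib (supp0 hW hA pair6_eF l (noMode op (0, true) (1, true) k v)) hb,
    add_sub_cancel_left]

end Main

section Main2
variable {W : Type*} [AddCommGroup W] [Module ℂ W]

lemma Tfin (op : WSym6 → ℤ → Module.End ℂ W)
    (hW : IsBosonicWeylSystem pair6 op) (hA : LocallyAnnihilating op) (k l : ℤ) (v : W) :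
    (Function.support fun j : ℤ =>
      (op ((0 : Fin 3), true) (k + j) (op ((2 : Fin 3), true) (l - j) v) +
       op ((1 : Fin 3), true) (k + j) (op ((2 : Fin 3), true) (l - j) v))).Finite := by
  apply Set.Finite.subset
    ((fin_supp hW hA (pair6_tt 0 2) k l v).union (fin_supp hW hA (pair6_tt 1 2) k l v))
  intro j hj
  rw [Function.mem_support] at hj
  by_contra h
  simp only [Set.mem_union, Function.mem_support, not_or, not_not] at h
  rw [h.1, h.2, add_zero] at hj
  exact hj rfl

end Main2

/-- in the six-symbol bosonic Weyl system, the quadratic Serre relation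
`[x₀⁺(k₁), [x₀⁺(k₂), x₁⁺(l)]] = 0` holds in mode form. -/
theorem serre_quadratic {W : Type*} [AddCommGroup W] [Module ℂ W]
    (op : WSym6 → ℤ → Module.End ℂ W)
    (hW : IsBosonicWeylSystem pair6 op) (hA : LocallyAnnihilating op)
    (k₁ k₂ l : ℤ) (w : W) :
    brkt (xZeroPlus op k₁) (brkt (xZeroPlus op k₂) (xOnePlus op l)) w = 0 := by
  show xZeroPlus op k₁ (brkt (xZeroPlus op k₂) (xOnePlus op l) w) -
    brkt (xZeroPlus op k₂) (xOnePlus op l) (xZeroPlus op k₁ w) = 0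
  rw [Yformula op hW hA k₂ l w, Yformula op hW hA k₂ l (xZeroPlus op k₁ w)]
  unfold xZeroPlus
  rw [noMode_smul hW hA pair6_BE]
  have key1 : noMode op (0, true) (1, true) k₁
      (∑ᶠ j : ℤ, (op (0, true) (k₂ + j) (op (2, true) (l - j) w) +
        op (1, true) (k₂ + j) (op (2, true) (l - j) w))) =
      ∑ᶠ j : ℤ, noMode op (0, true) (1, true) k₁
        (op (0, true) (k₂ + j) (op (2, true) (l - j) w) +
         op (1, true) (k₂ + j) (op (2, true) (l - j) w)) :=
    AddMonoidHom.map_finsum (AddMonoidHom.mk' (noMode op (0, true) (1, true) k₁)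
      (noMode_add hW hA pair6_BE k₁)) (Tfin op hW hA k₂ l w)
  rw [key1]
  have key2 : ∀ j : ℤ, noMode op (0, true) (1, true) k₁
      (op (0, true) (k₂ + j) (op (2, true) (l - j) w) +
       op (1, true) (k₂ + j) (op (2, true) (l - j) w)) =
      op (0, true) (k₂ + j) (op (2, true) (l - j) (noMode op (0, true) (1, true) k₁ w)) +
      op (1, true) (k₂ + j) (op (2, true) (l - j) (noMode op (0, true) (1, true) k₁ w)) := by
    intro j
    rw [noMode_add hW hA pair6_BE k₁,
      lemmaM hW hA _ _ _ pair6_BE (k₂ + j) (op (2, true) (l - j) w),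
      lemmaM hW hA _ _ _ pair6_BE (k₂ + j) (op (2, true) (l - j) w),
      lemmaM hW hA _ _ _ pair6_BE (l - j) w]
    simp only [pair6_tt, zero_smul, add_zero]
  rw [finsum_congr key2]
  have key3 : ∀ j : ℤ, (op ((0 : Fin 3), true) (k₂ + j) (op ((2 : Fin 3), true) (l - j)
        ((1 / 2 : ℂ) • noMode op (0, true) (1, true) k₁ w)) +
      op ((1 : Fin 3), true) (k₂ + j) (op ((2 : Fin 3), true) (l - j)
        ((1 / 2 : ℂ) • noMode op (0, true) (1, true) k₁ w))) =
      (1 / 2 : ℂ) • (op ((0 : Fin 3), true) (k₂ + j) (op ((2 : Fin 3), true) (l - j)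
        (noMode op (0, true) (1, true) k₁ w)) +
      op ((1 : Fin 3), true) (k₂ + j) (op ((2 : Fin 3), true) (l - j)
        (noMode op (0, true) (1, true) k₁ w))) := by
    intro j
    simp only [map_smul, smul_add]
  rw [finsum_congr key3, ← smul_finsum' (1 / 2 : ℂ)
    (Tfin op hW hA k₂ l (noMode op (0, true) (1, true) k₁ w)),
    smul_smul, smul_smul, mul_comm (1 / 2 : ℂ), sub_self]
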